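/- For a linear system ẋ = Ax + Bu, y = Cx, the IOS property (existence of β ∈ KL, γ ∈ K with |y(t,ξ,u)| ≤ β(|ξ|,t) + γ(‖u‖) for all trajectories) holds if and only if it holds for the zero input u ≡ 0, i.e., if and only if Ce^{tA}ξ → 0 uniformly on bounded sets of initial states with a KL bound. -/

import Mathlib

set_option synthInstance.maxHeartbeats 1000000
set_option maxHeartbeats 4000000
set_option linter.unusedSectionVars false


open Set Filter

/-- A function of class `K`: continuous and strictly increasing on `[0,∞)` with `γ 0 = 0`. -/
def ClassK (γ : ℝ → ℝ) : Prop :=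
  ContinuousOn γ (Ici 0) ∧ StrictMonoOn γ (Ici 0) ∧ γ 0 = 0

/-- A function of class `K∞`: class `K` and unbounded. -/
def ClassKInfty (γ : ℝ → ℝ) : Prop :=
  ClassK γ ∧ Tendsto γ atTop atTop

/-- A function of class `KL`: class `K` in the first argument for each fixed `t ≥ 0`;
continuous, decreasing and converging to `0` in the second argument for each fixed `r ≥ 0`. -/
def ClassKL (β : ℝ → ℝ → ℝ) : Prop :=
  (∀ t ∈ Ici (0:ℝ), ClassK (fun r => β r t)) ∧
  (∀ r ∈ Ici (0:ℝ), ContinuousOn (β r) (Ici 0) ∧ AntitoneOn (β r) (Ici 0) ∧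
    Tendsto (β r) atTop (nhds 0))

/-- An input is (globally) bounded. -/
def IsBddInput {m : ℕ} (u : ℝ → EuclideanSpace ℝ (Fin m)) : Prop :=
  ∃ C, ∀ t : ℝ, ‖u t‖ ≤ C

/-- The sup norm `‖u‖∞` of an input. -/
noncomputable def unorm {m : ℕ} (u : ℝ → EuclideanSpace ℝ (Fin m)) : ℝ :=
  ⨆ t : ℝ, ‖u t‖

/-- The output of the linear system `ẋ = Ax + Bu`, `y = Cx`, given by the variation of
parameters formula `y(t,ξ,u) = C e^{tA} ξ + ∫₀ᵗ C e^{(t−s)A} B u(s) ds`. -/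
noncomputable def linOut {n m p : ℕ}
    (A : EuclideanSpace ℝ (Fin n) →L[ℝ] EuclideanSpace ℝ (Fin n))
    (B : EuclideanSpace ℝ (Fin m) →L[ℝ] EuclideanSpace ℝ (Fin n))
    (C : EuclideanSpace ℝ (Fin n) →L[ℝ] EuclideanSpace ℝ (Fin p))
    (t : ℝ) (ξ : EuclideanSpace ℝ (Fin n)) (u : ℝ → EuclideanSpace ℝ (Fin m)) :
    EuclideanSpace ℝ (Fin p) :=
  C (NormedSpace.exp (t • A) ξ) +
    ∫ s in (0:ℝ)..t, C (NormedSpace.exp ((t - s) • A) (B (u s)))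

section decay

variable {E F : Type*} [NormedAddCommGroup E] [NormedSpace ℝ E]
  [NormedAddCommGroup F] [NormedSpace ℝ F]
  [FiniteDimensional ℝ E] [FiniteDimensional ℝ F]

lemma gfun_add (A : E →L[ℝ] E) (C : E →L[ℝ] F) (x s : ℝ) :
    C.comp (NormedSpace.exp ((x + s) • A)) =
      (C.comp (NormedSpace.exp (x • A))).comp (NormedSpace.exp (s • A)) := by
  have hc : Commute (x • A) (s • A) := by
    show (x • A).comp (s • A) = (s • A).comp (x • A)
    rw [ContinuousLinearMap.smul_comp, ContinuousLinearMap.comp_smul,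
      ContinuousLinearMap.smul_comp, ContinuousLinearMap.comp_smul, smul_comm]
  have h : (x + s) • A = x • A + s • A := add_smul x s A
  letI : NormedAlgebra ℚ (E →L[ℝ] E) := NormedAlgebra.restrictScalars ℚ ℝ (E →L[ℝ] E)
  rw [h, NormedSpace.exp_add_of_commute hc, ContinuousLinearMap.mul_def,
    ContinuousLinearMap.comp_assoc]

/-- Pointwise decay on the span. -/
lemma span_decay (A : E →L[ℝ] E) (C : E →L[ℝ] F)
    (h : Tendsto (fun t : ℝ => ‖C.comp (NormedSpace.exp (t • A))‖) atTop (nhds 0))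
    (L : E →L[ℝ] F)
    (hL : L ∈ Submodule.span ℝ ((fun t : ℝ => C.comp (NormedSpace.exp (t • A))) '' Ici 0)) :
    Tendsto (fun s : ℝ => L.comp (NormedSpace.exp (s • A))) atTop (nhds 0) := by
  induction hL using Submodule.span_induction with
  | mem L hLmem =>
      obtain ⟨τ, hτ, rfl⟩ := hLmem
      have h0 : Tendsto (fun t : ℝ => C.comp (NormedSpace.exp (t • A))) atTop (nhds 0) :=
        tendsto_zero_iff_norm_tendsto_zero.mpr h
      have h1 : Tendsto (fun s : ℝ => τ + s) atTop atTop :=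
        tendsto_atTop_add_const_left _ _ tendsto_id
      have := h0.comp h1
      refine this.congr fun s => ?_
      simp only [Function.comp]
      exact gfun_add A C τ s
  | zero => exact tendsto_const_nhds
  | add L M _ _ ihL ihM =>
      have := ihL.add ihM
      rw [add_zero] at this
      refine this.congr fun s => ?_
      exact (ContinuousLinearMap.add_comp _ _ _).symm
  | smul c L _ ihL =>
      have h2 : Tendsto (fun s : ℝ => c • L.comp (NormedSpace.exp (s • A))) atTop (nhds 0) := by
        convert ihL.const_smul c using 2
        exact (smul_zero c).symm
      exact h2.congr fun s => (ContinuousLinearMap.smul_comp c _ _).symm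

lemma exp_decay [CompleteSpace E] [CompleteSpace F] (A : E →L[ℝ] E) (C : E →L[ℝ] F)
    (h : Tendsto (fun t : ℝ => ‖C.comp (NormedSpace.exp (t • A))‖) atTop (nhds 0)) :
    ∃ M a : ℝ, 0 < M ∧ 0 < a ∧ ∀ t : ℝ, 0 ≤ t →
      ‖C.comp (NormedSpace.exp (t • A))‖ ≤ M * Real.exp (-a * t) := by
  classical
  set g : ℝ → (E →L[ℝ] F) := fun t => C.comp (NormedSpace.exp (t • A)) with hg
  set S : Submodule ℝ (E →L[ℝ] F) := Submodule.span ℝ (g '' Ici 0) with hS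
  haveI : FiniteDimensional ℝ S := inferInstance
  set d := Module.finrank ℝ S with hd
  set b : Module.Basis (Fin d) ℝ S := Module.finBasis ℝ S with hb
  have hcoordbd : ∀ j : Fin d, ∃ K : ℝ, 0 < K ∧ ∀ v : S, ‖b.coord j v‖ ≤ K * ‖v‖ :=
    fun j => SemilinearMapClass.bound_of_continuous (σ₁₂ := RingHom.id ℝ) (b.coord j)
      (b.coord j).continuous_of_finiteDimensional
  choose K hK0 hKb using hcoordbd
  -- pointwise decay of basis compositions
  have hbj : ∀ j : Fin d, Tendsto
      (fun s : ℝ => ‖((b j : E →L[ℝ] F)).comp (NormedSpace.exp (s • A))‖) atTop (nhds 0) := by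
    intro j
    have := span_decay A C h (b j : E →L[ℝ] F) (SetLike.coe_mem (b j))
    simpa using this.norm
  have hsum : Tendsto
      (fun s : ℝ => ∑ j : Fin d, K j * ‖((b j : E →L[ℝ] F)).comp (NormedSpace.exp (s • A))‖)
      atTop (nhds 0) := by
    have := tendsto_finset_sum (Finset.univ : Finset (Fin d))
      (fun j _ => ((hbj j).const_mul (K j)))
    simpa using this
  obtain ⟨s₀, hs₀⟩ := eventually_atTop.mp (hsum.eventually (gt_mem_nhds (by norm_num : (0:ℝ) < 1/2)))
  set s₁ : ℝ := max s₀ 1 with hs₁def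
  have hs₁pos : 0 < s₁ := lt_of_lt_of_le one_pos (le_max_right _ _)
  have hs₁sum : ∑ j : Fin d, K j * ‖((b j : E →L[ℝ] F)).comp (NormedSpace.exp (s₁ • A))‖
      ≤ 1/2 := (hs₀ s₁ (le_max_left _ _)).le
  -- operator half-step on the span
  have hhalfop : ∀ L, L ∈ S →
      ‖L.comp (NormedSpace.exp (s₁ • A))‖ ≤ 1/2 * ‖L‖ := by
    intro L hL
    set X := NormedSpace.exp (s₁ • A) with hX
    set Φ : (E →L[ℝ] F) →L[ℝ] (E →L[ℝ] F) :=
      (ContinuousLinearMap.compL ℝ E E F).flip X with hΦ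
    have hΦapp : ∀ W : E →L[ℝ] F, Φ W = W.comp X := fun W => rfl
    have hrepr : (⟨L, hL⟩ : S) = ∑ j : Fin d, b.repr ⟨L, hL⟩ j • b j := (b.sum_repr _).symm
    have hreprL : L = ∑ j : Fin d, b.repr ⟨L, hL⟩ j • (b j : E →L[ℝ] F) := by
      have := congrArg (fun v : S => (v : E →L[ℝ] F)) hrepr
      simpa only [Submodule.coe_sum, Submodule.coe_smul] using this
    have hcomp : L.comp X = ∑ j : Fin d, b.repr ⟨L, hL⟩ j • ((b j : E →L[ℝ] F)).comp X := by
      rw [← hΦapp L]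
      conv_lhs => rw [hreprL]
      rw [map_sum]
      exact Finset.sum_congr rfl fun j _ => by rw [map_smul, hΦapp]
    rw [hcomp]
    refine le_trans (norm_sum_le _ _) ?_
    have hterm : ∀ j : Fin d,
        ‖b.repr ⟨L, hL⟩ j • ((b j : E →L[ℝ] F)).comp X‖
          ≤ (K j * ‖((b j : E →L[ℝ] F)).comp X‖) * ‖L‖ := by
      intro j
      rw [norm_smul (b.repr ⟨L, hL⟩ j) (((b j : E →L[ℝ] F)).comp X)]
      have h1 : ‖b.repr ⟨L, hL⟩ j‖ ≤ K j * ‖(⟨L, hL⟩ : S)‖ := hKb j ⟨L, hL⟩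
      have h2 : ‖(⟨L, hL⟩ : S)‖ = ‖L‖ := rfl
      rw [h2] at h1
      calc ‖b.repr ⟨L, hL⟩ j‖ * ‖((b j : E →L[ℝ] F)).comp X‖
          ≤ (K j * ‖L‖) * ‖((b j : E →L[ℝ] F)).comp X‖ :=
            mul_le_mul_of_nonneg_right h1 (norm_nonneg _)
        _ = (K j * ‖((b j : E →L[ℝ] F)).comp X‖) * ‖L‖ := by ring
    refine le_trans (Finset.sum_le_sum fun j _ => hterm j) ?_
    rw [← Finset.sum_mul]
    exact mul_le_mul_of_nonneg_right hs₁sum (norm_nonneg _)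
  have hmemS : ∀ t : ℝ, 0 ≤ t → g t ∈ S := fun t ht => Submodule.subset_span ⟨t, ht, rfl⟩
  have hhalf : ∀ t : ℝ, 0 ≤ t → ‖g (t + s₁)‖ ≤ 1/2 * ‖g t‖ := by
    intro t ht
    rw [hg]
    rw [show (fun t => C.comp (NormedSpace.exp (t • A))) (t + s₁)
        = C.comp (NormedSpace.exp ((t + s₁) • A)) from rfl, gfun_add A C t s₁]
    exact hhalfop _ (hmemS t ht)
  have hiter : ∀ k : ℕ, ∀ t : ℝ, 0 ≤ t → ‖g (t + k * s₁)‖ ≤ (1/2)^k * ‖g t‖ := by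
    intro k
    induction k with
    | zero => intro t ht; simp
    | succ k ih =>
        intro t ht
        have h1 : t + (k+1 : ℕ) * s₁ = (t + k * s₁) + s₁ := by push_cast; ring
        rw [h1]
        have h2 := hhalf (t + k * s₁) (by positivity)
        calc ‖g (t + k * s₁ + s₁)‖ ≤ 1/2 * ‖g (t + k * s₁)‖ := h2
          _ ≤ 1/2 * ((1/2)^k * ‖g t‖) := by
              have := ih t ht
              linarith
          _ = (1/2)^(k+1) * ‖g t‖ := by ring
  -- bound on the compact interval
  have hgc : Continuous g := by
    letI : NormedAlgebra ℚ (E →L[ℝ] E) := NormedAlgebra.restrictScalars ℚ ℝ (E →L[ℝ] E)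
    have h1 : Continuous fun t : ℝ => NormedSpace.exp (t • A) :=
      NormedSpace.exp_continuous.comp (continuous_id.smul continuous_const)
    exact ((ContinuousLinearMap.compL ℝ E E F) C).continuous.comp h1
  obtain ⟨M₁, hM₁⟩ := (isCompact_Icc (a := (0:ℝ)) (b := s₁)).exists_bound_of_continuousOn
    hgc.continuousOn
  have hM₁0 : 0 ≤ M₁ := le_trans (norm_nonneg (g 0)) (hM₁ 0 ⟨le_refl _, hs₁pos.le⟩)
  set a : ℝ := Real.log 2 / s₁ with ha
  have hapos : 0 < a := div_pos (Real.log_pos one_lt_two) hs₁pos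
  refine ⟨2 * (M₁ + 1), a, by positivity, hapos, ?_⟩
  intro t ht
  set k := ⌊t / s₁⌋₊ with hk
  have hk1 : (k : ℝ) * s₁ ≤ t := by
    have := Nat.floor_le (div_nonneg ht hs₁pos.le)
    calc (k:ℝ) * s₁ ≤ (t / s₁) * s₁ := mul_le_mul_of_nonneg_right this hs₁pos.le
      _ = t := div_mul_cancel₀ t hs₁pos.ne'
  have hk2 : t < ((k : ℝ) + 1) * s₁ := by
    have := Nat.lt_floor_add_one (t / s₁)
    calc t = (t / s₁) * s₁ := (div_mul_cancel₀ t hs₁pos.ne').symm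
      _ < ((k:ℝ) + 1) * s₁ := by
          apply mul_lt_mul_of_pos_right _ hs₁pos
          exact_mod_cast this
  set r := t - k * s₁ with hr
  have hr0 : 0 ≤ r := by simp [hr]; linarith
  have hrs : r ≤ s₁ := by simp [hr]; nlinarith
  have ht_eq : t = r + k * s₁ := by ring
  have hstep1 : ‖g t‖ ≤ (1/2)^k * M₁ := by
    rw [ht_eq]
    calc ‖g (r + k * s₁)‖ ≤ (1/2)^k * ‖g r‖ := hiter k r hr0
      _ ≤ (1/2)^k * M₁ := by
          have hgr := hM₁ r ⟨hr0, hrs⟩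
          have : (0:ℝ) ≤ (1/2)^k := by positivity
          nlinarith
  have h2k : ((1:ℝ)/2)^k ≤ 2 * Real.exp (-a * t) := by
    have heq : ((1:ℝ)/2)^k = Real.exp (-((k:ℝ) * Real.log 2)) := by
      rw [Real.exp_neg, Real.exp_nat_mul, Real.exp_log two_pos, one_div, inv_pow]
    rw [heq]
    have hle : -((k:ℝ) * Real.log 2) ≤ Real.log 2 + (-a * t) := by
      have hlog : (0:ℝ) < Real.log 2 := Real.log_pos one_lt_two
      have htdiv : t / s₁ < (k:ℝ) + 1 := by
        rw [div_lt_iff₀ hs₁pos]; linarith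
      have haux : a * t = (t / s₁) * Real.log 2 := by
        rw [ha]; field_simp
      nlinarith [mul_lt_mul_of_pos_right htdiv hlog]
    calc Real.exp (-((k:ℝ) * Real.log 2)) ≤ Real.exp (Real.log 2 + (-a * t)) :=
          Real.exp_le_exp.mpr hle
      _ = 2 * Real.exp (-a * t) := by rw [Real.exp_add, Real.exp_log two_pos]
  calc ‖g t‖ ≤ (1/2)^k * M₁ := hstep1
    _ ≤ (2 * Real.exp (-a * t)) * (M₁ + 1) := by
        have hexp : (0:ℝ) < Real.exp (-a * t) := Real.exp_pos _
        have hp : (0:ℝ) ≤ (1/2)^k := by positivity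
        nlinarith
    _ = 2 * (M₁ + 1) * Real.exp (-a * t) := by ring

end decay

/-- For a linear system `ẋ = Ax + Bu`, `y = Cx`, the IOS property holds (for all bounded
measurable inputs) if and only if it holds for the zero input, i.e. iff `C e^{tA} ξ`
admits a `KL` bound. -/



theorem stmt14 {n m p : ℕ}
    (A : EuclideanSpace ℝ (Fin n) →L[ℝ] EuclideanSpace ℝ (Fin n))
    (B : EuclideanSpace ℝ (Fin m) →L[ℝ] EuclideanSpace ℝ (Fin n))
    (C : EuclideanSpace ℝ (Fin n) →L[ℝ] EuclideanSpace ℝ (Fin p)) :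
    (∃ β : ℝ → ℝ → ℝ, ∃ γ : ℝ → ℝ, ClassKL β ∧ ClassK γ ∧
        ∀ ξ, ∀ u : ℝ → EuclideanSpace ℝ (Fin m), Measurable u → IsBddInput u →
          ∀ t : ℝ, 0 ≤ t → ‖linOut A B C t ξ u‖ ≤ β ‖ξ‖ t + γ (unorm u)) ↔
    (∃ β : ℝ → ℝ → ℝ, ClassKL β ∧
        ∀ ξ, ∀ t : ℝ, 0 ≤ t → ‖C (NormedSpace.exp (t • A) ξ)‖ ≤ β ‖ξ‖ t) := by
  constructor
  · rintro ⟨β, γ, hβ, hγ, H⟩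
    refine ⟨β, hβ, fun ξ t ht => ?_⟩
    have h0 := H ξ (fun _ => 0) measurable_const ⟨0, fun s => by simp⟩ t ht
    have hlin : linOut A B C t ξ (fun _ => 0) = C (NormedSpace.exp (t • A) ξ) := by
      unfold linOut
      have : ∀ s : ℝ, C (NormedSpace.exp ((t - s) • A) (B (0 : EuclideanSpace ℝ (Fin m)))) = 0 := by
        intro s; simp
      simp only [this, intervalIntegral.integral_zero, add_zero]
    have hunorm : unorm (fun _ : ℝ => (0 : EuclideanSpace ℝ (Fin m))) = 0 := by
      unfold unorm
      simp [ciSup_const]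
    rw [hlin, hunorm, hγ.2.2, add_zero] at h0
    exact h0
  · rintro ⟨β, hβ, H⟩
    -- operator norm bound
    have hβ1nonneg : ∀ t : ℝ, 0 ≤ t → 0 ≤ β 1 t := by
      intro t ht
      have hK := hβ.1 t ht
      have := hK.2.1 (self_mem_Ici) (by norm_num : (1:ℝ) ∈ Ici 0) one_pos
      simp only [hK.2.2] at this
      exact this.le
    have hN : ∀ t : ℝ, 0 ≤ t → ‖C.comp (NormedSpace.exp (t • A))‖ ≤ β 1 t := by
      intro t ht
      refine ContinuousLinearMap.opNorm_le_bound _ (hβ1nonneg t ht) fun x => ?_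
      rcases eq_or_ne x 0 with rfl | hx
      · simp [hβ1nonneg t ht]
      · have hxn : (0:ℝ) < ‖x‖ := norm_pos_iff.mpr hx
        set y := ‖x‖⁻¹ • x with hy
        have hyn : ‖y‖ = 1 := norm_smul_inv_norm hx
        have hxy : x = ‖x‖ • y := by
          rw [hy, smul_smul, mul_inv_cancel₀ hxn.ne', one_smul]
        have hH := H y t ht
        rw [hyn] at hH
        calc ‖(C.comp (NormedSpace.exp (t • A))) x‖
            = ‖C (NormedSpace.exp (t • A) x)‖ := rfl
          _ = ‖C (NormedSpace.exp (t • A) (‖x‖ • y))‖ := by rw [← hxy]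
          _ = ‖x‖ * ‖C (NormedSpace.exp (t • A) y)‖ := by
              rw [map_smul, map_smul, norm_smul, Real.norm_eq_abs, abs_of_pos hxn]
          _ ≤ ‖x‖ * β 1 t := by
              exact mul_le_mul_of_nonneg_left hH hxn.le
          _ = β 1 t * ‖x‖ := mul_comm _ _
    have htend : Tendsto (fun t : ℝ => ‖C.comp (NormedSpace.exp (t • A))‖) atTop (nhds 0) := by
      refine squeeze_zero' (g := β 1) (Eventually.of_forall fun t => norm_nonneg _) ?_ ?_
      · exact (eventually_ge_atTop 0).mono fun t ht => hN t ht
      · exact (hβ.2 1 (by norm_num : (1:ℝ) ∈ Ici 0)).2.2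
    obtain ⟨M, a, hM, ha, hdecay⟩ := exp_decay A C htend
    refine ⟨fun r t => M * Real.exp (-a * t) * r, fun s => (M * (‖B‖ + 1) / a) * s, ?_, ?_, ?_⟩
    · constructor
      · intro t ht
        refine ⟨(Continuous.continuousOn (by continuity)), ?_, by ring⟩
        intro x _ y _ hxy
        have hpos : 0 < M * Real.exp (-a * t) := by positivity
        exact (mul_lt_mul_iff_right₀ hpos).mpr hxy
      · intro r hr
        refine ⟨Continuous.continuousOn (by continuity), ?_, ?_⟩
        · intro x _ y _ hxy
          have hle : Real.exp (-a * y) ≤ Real.exp (-a * x) := by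
            apply Real.exp_le_exp.mpr; nlinarith
          have hr0 : (0:ℝ) ≤ r := hr
          dsimp only
          exact mul_le_mul_of_nonneg_right (mul_le_mul_of_nonneg_left hle hM.le) hr0
        · have h1 : Tendsto (fun t : ℝ => a * t) atTop atTop :=
            Tendsto.const_mul_atTop ha tendsto_id
          have h2 : Tendsto (fun t : ℝ => -(a * t)) atTop atBot :=
            tendsto_neg_atTop_atBot.comp h1
          have h3 : Tendsto (fun t : ℝ => Real.exp (-(a * t))) atTop (nhds 0) :=
            Real.tendsto_exp_atBot.comp h2
          have h4 : Tendsto (fun t : ℝ => M * Real.exp (-(a * t)) * r) atTop (nhds (M * 0 * r)) :=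
            (h3.const_mul M).mul_const r
          rw [mul_zero, zero_mul] at h4
          exact h4.congr fun t => by ring_nf
    · refine ⟨Continuous.continuousOn (by continuity), ?_, by ring⟩
      intro x _ y _ hxy
      have hpos : 0 < M * (‖B‖ + 1) / a := by positivity
      exact (mul_lt_mul_iff_right₀ hpos).mpr hxy
    · intro ξ u humeas hubdd t ht
      obtain ⟨Cu, hCu⟩ := hubdd
      have hbdd : BddAbove (range fun s : ℝ => ‖u s‖) := ⟨Cu, by rintro _ ⟨s, rfl⟩; exact hCu s⟩
      set U := unorm u with hU
      have hUs : ∀ s : ℝ, ‖u s‖ ≤ U := fun s => le_ciSup hbdd s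
      have hU0 : 0 ≤ U := le_trans (norm_nonneg (u 0)) (hUs 0)
      have hterm1 : ‖C (NormedSpace.exp (t • A) ξ)‖ ≤ M * Real.exp (-a * t) * ‖ξ‖ := by
        calc ‖C (NormedSpace.exp (t • A) ξ)‖
            = ‖(C.comp (NormedSpace.exp (t • A))) ξ‖ := rfl
          _ ≤ ‖C.comp (NormedSpace.exp (t • A))‖ * ‖ξ‖ := ContinuousLinearMap.le_opNorm _ _
          _ ≤ M * Real.exp (-a * t) * ‖ξ‖ :=
              mul_le_mul_of_nonneg_right (hdecay t ht) (norm_nonneg _)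
      set Gm : ℝ → ℝ := fun s => M * Real.exp (-a * (t - s)) * ((‖B‖ + 1) * U) with hGm
      have hGcont : Continuous Gm := by continuity
      have hGint : IntervalIntegrable Gm MeasureTheory.volume 0 t :=
        hGcont.intervalIntegrable 0 t
      have hbound : ∀ s ∈ Set.uIoc (0:ℝ) t, ‖C (NormedSpace.exp ((t - s) • A) (B (u s)))‖ ≤ Gm s := by
        intro s hs
        rw [uIoc_of_le ht] at hs
        have hts : 0 ≤ t - s := by linarith [hs.2]
        have h1 : ‖C (NormedSpace.exp ((t - s) • A) (B (u s)))‖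
            ≤ ‖C.comp (NormedSpace.exp ((t - s) • A))‖ * ‖B (u s)‖ := by
          have := (C.comp (NormedSpace.exp ((t - s) • A))).le_opNorm (B (u s))
          simpa using this
        have h2 : ‖C.comp (NormedSpace.exp ((t - s) • A))‖ ≤ M * Real.exp (-a * (t - s)) :=
          hdecay _ hts
        have h3 : ‖B (u s)‖ ≤ ‖B‖ * U := by
          calc ‖B (u s)‖ ≤ ‖B‖ * ‖u s‖ := B.le_opNorm _
            _ ≤ ‖B‖ * U := mul_le_mul_of_nonneg_left (hUs s) (norm_nonneg _)
        have hBU : (0:ℝ) ≤ ‖B‖ * U := mul_nonneg (norm_nonneg _) hU0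
        have hexp : (0:ℝ) < Real.exp (-a * (t - s)) := Real.exp_pos _
        calc ‖C (NormedSpace.exp ((t - s) • A) (B (u s)))‖
            ≤ ‖C.comp (NormedSpace.exp ((t - s) • A))‖ * ‖B (u s)‖ := h1
          _ ≤ (M * Real.exp (-a * (t - s))) * (‖B‖ * U) := by
              apply mul_le_mul h2 h3 (norm_nonneg _)
              positivity
          _ ≤ Gm s := by
              show M * Real.exp (-a * (t - s)) * (‖B‖ * U)
                ≤ M * Real.exp (-a * (t - s)) * ((‖B‖ + 1) * U)
              have hMe : (0:ℝ) ≤ M * Real.exp (-a * (t - s)) := by positivity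
              nlinarith
      have h1 : ‖∫ s in (0:ℝ)..t, C (NormedSpace.exp ((t - s) • A) (B (u s)))‖
          ≤ |∫ s in (0:ℝ)..t, Gm s| := by
        refine intervalIntegral.norm_integral_le_abs_of_norm_le ?_ hGint
        exact (MeasureTheory.ae_restrict_mem measurableSet_uIoc).mono fun s hs => hbound s hs
      have hiv : (∫ s in (0:ℝ)..t, Real.exp (a * s - a * t))
          = Real.exp (a * t - a * t) / a - Real.exp (a * 0 - a * t) / a := by
        refine intervalIntegral.integral_eq_sub_of_hasDerivAt
          (f := fun s : ℝ => Real.exp (a * s - a * t) / a) (fun s _ => ?_) ?_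
        · have hd1 : HasDerivAt (fun s : ℝ => a * s - a * t) a s := by
            simpa using ((hasDerivAt_id s).const_mul a).sub_const (a * t)
          have hd2 := hd1.exp
          have hd3 := hd2.div_const a
          simpa [mul_div_assoc, mul_div_cancel_right₀ _ ha.ne'] using hd3
        · exact (Continuous.intervalIntegrable (by continuity) 0 t)
      have hGval : (∫ s in (0:ℝ)..t, Gm s)
          = (M * ((‖B‖ + 1) * U)) * ((1 - Real.exp (-a * t)) / a) := by
        have hcongr : (∫ s in (0:ℝ)..t, Gm s)
            = ∫ s in (0:ℝ)..t, (M * ((‖B‖ + 1) * U)) * Real.exp (a * s - a * t) := by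
          apply intervalIntegral.integral_congr
          intro s _
          show M * Real.exp (-a * (t - s)) * ((‖B‖ + 1) * U) = _
          rw [show -a * (t - s) = a * s - a * t from by ring]
          ring
        rw [hcongr, intervalIntegral.integral_const_mul, hiv]
        rw [sub_self, Real.exp_zero]
        congr 1
        rw [mul_zero, zero_sub, neg_mul]
        ring
      have hGnonneg : (0:ℝ) ≤ ∫ s in (0:ℝ)..t, Gm s := by
        apply intervalIntegral.integral_nonneg ht
        intro s _
        rw [hGm]
        positivity
      have hterm2 : ‖∫ s in (0:ℝ)..t, C (NormedSpace.exp ((t - s) • A) (B (u s)))‖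
          ≤ (M * (‖B‖ + 1) / a) * U := by
        refine le_trans h1 ?_
        rw [abs_of_nonneg hGnonneg, hGval]
        have hexp : (0:ℝ) < Real.exp (-a * t) := Real.exp_pos _
        have hexple : Real.exp (-a * t) ≤ 1 := by
          rw [show (1:ℝ) = Real.exp 0 from (Real.exp_zero).symm]
          apply Real.exp_le_exp.mpr; nlinarith
        have h5 : (1 - Real.exp (-a * t)) / a ≤ 1 / a :=
          (div_le_div_iff_of_pos_right ha).mpr (by nlinarith)
        calc (M * ((‖B‖ + 1) * U)) * ((1 - Real.exp (-a * t)) / a)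
            ≤ (M * ((‖B‖ + 1) * U)) * (1 / a) :=
              mul_le_mul_of_nonneg_left h5 (by positivity)
          _ = (M * (‖B‖ + 1) / a) * U := by ring
      calc ‖linOut A B C t ξ u‖
          ≤ ‖C (NormedSpace.exp (t • A) ξ)‖
            + ‖∫ s in (0:ℝ)..t, C (NormedSpace.exp ((t - s) • A) (B (u s)))‖ := by
            unfold linOut; exact norm_add_le _ _
        _ ≤ M * Real.exp (-a * t) * ‖ξ‖ + (M * (‖B‖ + 1) / a) * U :=
            add_le_add hterm1 hterm2
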